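/- arXiv:1209.4294 — 4 statements merged into one kernel-verified Lean document; each statement's English description precedes it below -/
import Mathlib

section
/- A Banach space X is weakly universal for a class B of Banach spaces (every Y ∈ B is isomorphic to a quotient of a closed subspace of X) if and only if every Y ∈ B is isomorphic to a closed subspace of a quotient of X. -/
open Metric Topology

set_option maxHeartbeats 1000000


/-- A Banach space `X` is weakly universal for a class `ℬ` of Banach spaces (every `Y ∈ ℬ`
is isomorphic to a quotient of a closed subspace of `X`, i.e. the image of a bounded linear
surjection from a closed subspace) if and only if every `Y ∈ ℬ` is isomorphic to a closed
subspace of a quotient of `X` (i.e. embeds in `X ⧸ Z` by an isomorphism onto its range). -/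
theorem stmt12 (X : Type) [NormedAddCommGroup X] [NormedSpace ℝ X] [CompleteSpace X]
    (ℬ : (Y : Type) → [NormedAddCommGroup Y] → [NormedSpace ℝ Y] → [CompleteSpace Y] → Prop) :
    (∀ (Y : Type) [NormedAddCommGroup Y] [NormedSpace ℝ Y] [CompleteSpace Y], ℬ Y →
        ∃ Z : Submodule ℝ X, IsClosed (Z : Set X) ∧
          ∃ T : Z →L[ℝ] Y, Function.Surjective T) ↔
      (∀ (Y : Type) [NormedAddCommGroup Y] [NormedSpace ℝ Y] [CompleteSpace Y], ℬ Y →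
        ∃ Z : Submodule ℝ X, IsClosed (Z : Set X) ∧
          ∃ T : Y →L[ℝ] X ⧸ Z, Function.Injective T ∧
            ∃ c : ℝ, 0 < c ∧ ∀ y : Y, c * ‖y‖ ≤ ‖T y‖) := by
  constructor
  · intro h Y _ _ _ hY
    obtain ⟨Z, hZc, T, hTsurj⟩ := h Y hY
    haveI : CompleteSpace Z := hZc.completeSpace_coe
    set N : Submodule ℝ Z := LinearMap.ker (T : Z →ₗ[ℝ] Y) with hN
    set N' : Submodule ℝ X := N.map Z.subtype with hN'
    have hN'c : IsClosed (N' : Set X) := by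
      have h1 : IsClosed (N : Set Z) := ContinuousLinearMap.isClosed_ker T
      have h2 := hZc.isClosedEmbedding_subtypeVal
      have : (N' : Set X) = Subtype.val '' (N : Set Z) := by
        ext x; simp [hN', Submodule.mem_map]
      rw [this]
      exact h2.isClosedMap _ h1
    -- lifted map
    set Tbar : (Z ⧸ N) →ₗ[ℝ] Y := N.liftQ T.toLinearMap le_rfl with hTbar
    have hTbarmk : ∀ z : Z, Tbar (Submodule.Quotient.mk z) = T z := fun z => rfl
    have hTbarcont : Continuous Tbar := by
      rw [← N.isOpenQuotientMap_mkQ.continuous_comp_iff]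
      exact T.continuous
    set TbarL : (Z ⧸ N) →L[ℝ] Y := ⟨Tbar, hTbarcont⟩ with hTbarL
    have hker : LinearMap.ker (TbarL : (Z ⧸ N) →ₗ[ℝ] Y) = ⊥ := by
      apply LinearMap.ker_eq_bot.mpr
      intro a b hab
      obtain ⟨za, rfl⟩ := Submodule.Quotient.mk_surjective N a
      obtain ⟨zb, rfl⟩ := Submodule.Quotient.mk_surjective N b
      rw [Submodule.Quotient.eq]
      have hTab : T za = T zb := hab
      simp [hN, LinearMap.mem_ker, map_sub, hTab]
    have hrange : LinearMap.range (TbarL : (Z ⧸ N) →ₗ[ℝ] Y) = ⊤ := by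
      rw [LinearMap.range_eq_top]
      intro y
      obtain ⟨z, hz⟩ := hTsurj y
      exact ⟨Submodule.Quotient.mk z, hz⟩
    haveI : IsClosed ((N : Submodule ℝ Z) : Set Z) := ContinuousLinearMap.isClosed_ker T
    have e : (Z ⧸ N) ≃L[ℝ] Y := ContinuousLinearEquiv.ofBijective TbarL hker hrange
    -- the isometric map j
    have hle : N ≤ N'.comap Z.subtype := fun z hz => Submodule.mem_map_of_mem hz
    set j : (Z ⧸ N) →ₗ[ℝ] (X ⧸ N') := N.mapQ N' Z.subtype hle with hj
    have hjnorm : ∀ q : Z ⧸ N, ‖j q‖ = ‖q‖ := by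
      intro q
      obtain ⟨z, rfl⟩ := Submodule.Quotient.mk_surjective N q
      have h1 : ‖(Submodule.Quotient.mk z : Z ⧸ N)‖ = infDist z (N : Set Z) :=
        QuotientAddGroup.norm_mk z
      have h2 : j (Submodule.Quotient.mk z) = Submodule.Quotient.mk (z : X) := rfl
      have h3 : ‖(Submodule.Quotient.mk (z : X) : X ⧸ N')‖ = infDist (z : X) (N' : Set X) :=
        QuotientAddGroup.norm_mk (z : X)
      have h4 : (N' : Set X) = Subtype.val '' (N : Set Z) := by
        ext x; simp [hN', Submodule.mem_map]
      rw [h2, h3, h4, infDist_image isometry_subtype_coe, h1]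
    set jL : (Z ⧸ N) →L[ℝ] (X ⧸ N') := j.mkContinuous 1 (fun q => by rw [hjnorm q, one_mul])
      with hjL
    have hjLinj : Function.Injective jL := by
      intro a b hab
      have hz : jL (a - b) = 0 := by rw [map_sub, hab, sub_self]
      have hz' : j (a - b) = 0 := hz
      have h0 : ‖a - b‖ = 0 := by rw [← hjnorm (a - b), hz', norm_zero]
      exact sub_eq_zero.mp (norm_eq_zero.mp h0)
    refine ⟨N', hN'c, jL.comp (e.symm : Y →L[ℝ] Z ⧸ N), ?_, ?_⟩
    · intro a b hab
      exact e.symm.injective (hjLinj hab)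
    · refine ⟨(max ‖(e : (Z ⧸ N) →L[ℝ] Y)‖ 1)⁻¹, by positivity, ?_⟩
      intro y
      have hpos : (0:ℝ) < max ‖(e : (Z ⧸ N) →L[ℝ] Y)‖ 1 :=
        lt_of_lt_of_le one_pos (le_max_right _ _)
      have h2 : ‖y‖ ≤ max ‖(e : (Z ⧸ N) →L[ℝ] Y)‖ 1 * ‖e.symm y‖ := by
        calc ‖y‖ = ‖e (e.symm y)‖ := by rw [e.apply_symm_apply]
          _ ≤ ‖(e : (Z ⧸ N) →L[ℝ] Y)‖ * ‖e.symm y‖ :=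
              (e : (Z ⧸ N) →L[ℝ] Y).le_opNorm _
          _ ≤ _ := by gcongr; exact le_max_left _ _
      have h3 : (jL.comp (e.symm : Y →L[ℝ] Z ⧸ N)) y = jL (e.symm y) := rfl
      rw [h3, inv_mul_le_iff₀ hpos]
      have h1 : ‖jL (e.symm y)‖ = ‖e.symm y‖ := hjnorm _
      rw [h1]
      exact h2
  · intro h Y _ _ _ hY
    obtain ⟨Z, hZc, T, hTinj, c, hc, hT⟩ := h Y hY
    haveI : IsClosed (Z : Set X) := hZc
    set N : Submodule ℝ (X ⧸ Z) := LinearMap.range (T : Y →ₗ[ℝ] X ⧸ Z) with hN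
    have hanti : AntilipschitzWith (⟨c, hc.le⟩ : NNReal)⁻¹ T := by
      apply T.antilipschitz_of_bound
      intro y
      show ‖y‖ ≤ c⁻¹ * ‖T y‖
      rw [le_inv_mul_iff₀ hc]
      exact hT y
    have hNc : IsClosed (N : Set (X ⧸ Z)) := by
      have : (N : Set (X ⧸ Z)) = Set.range T := by
        ext x; simp [hN, LinearMap.mem_range]
      rw [this]
      exact hanti.isClosed_range T.uniformContinuous
    haveI : CompleteSpace N := hNc.completeSpace_coe
    set Tr : Y →L[ℝ] N := T.codRestrict N (fun y => LinearMap.mem_range_self _ y) with hTr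
    have hker : LinearMap.ker (Tr : Y →ₗ[ℝ] N) = ⊥ := by
      apply LinearMap.ker_eq_bot.mpr
      intro a b hab
      apply hTinj
      have := congrArg (Subtype.val) hab
      exact this
    have hrange : LinearMap.range (Tr : Y →ₗ[ℝ] N) = ⊤ := by
      rw [LinearMap.range_eq_top]
      rintro ⟨x, hx⟩
      obtain ⟨y, hy⟩ := hx
      exact ⟨y, Subtype.ext hy⟩
    obtain ⟨e, hey⟩ : ∃ e : Y ≃L[ℝ] ↥N, ∀ y, e y = Tr y :=
      ⟨ContinuousLinearEquiv.ofBijective Tr hker hrange, fun y => rfl⟩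
    set W : Submodule ℝ X := N.comap Z.mkQ with hW
    have hWc : IsClosed (W : Set X) := by
      have hcont : Continuous Z.mkQ := continuous_quot_mk
      have : (W : Set X) = Z.mkQ ⁻¹' (N : Set (X ⧸ Z)) := rfl
      rw [this]
      exact hNc.preimage hcont
    refine ⟨W, hWc, ?_⟩
    set P : W →ₗ[ℝ] N := (Z.mkQ.comp W.subtype).codRestrict N (fun w => w.2) with hP
    have hPbound : ∀ w : W, ‖P w‖ ≤ 1 * ‖w‖ := by
      intro w
      rw [one_mul]
      exact Submodule.Quotient.norm_mk_le Z (w : X)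
    set PL : W →L[ℝ] N := P.mkContinuous 1 hPbound with hPL
    refine ⟨(e.symm : N →L[ℝ] Y).comp PL, ?_⟩
    intro y
    obtain ⟨x, hx⟩ := Submodule.mkQ_surjective Z (T y)
    have hxW : x ∈ W := by
      rw [hW, Submodule.mem_comap, hx]
      exact LinearMap.mem_range_self _ y
    refine ⟨⟨x, hxW⟩, ?_⟩
    have hPeq : PL ⟨x, hxW⟩ = e y := by
      rw [hey y]
      apply Subtype.ext
      show Z.mkQ x = (Tr y : X ⧸ Z)
      rw [hx]; rfl
    show e.symm (PL ⟨x, hxW⟩) = y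
    rw [hPeq, ContinuousLinearEquiv.symm_apply_apply]
end

section
/- Let K and B be associated classes of compact spaces and Banach spaces (K ∈ K implies C(K) ∈ B; X ∈ B implies B_{X*} ∈ K). If a compact space K ∈ K is weakly universal for K (every L ∈ K is a continuous image of a closed subspace of K), then C(K) is weakly universal for B: every X ∈ B is isomorphic to a quotient of a subspace of C(K). -/
open WeakDual

theorem aux_compact {X : Type} [NormedAddCommGroup X] [NormedSpace ℝ X] :
    CompactSpace {φ : WeakDual ℝ X // ‖toStrongDual φ‖ ≤ 1} := by
  have : IsCompact {φ : WeakDual ℝ X | ‖toStrongDual φ‖ ≤ 1} := by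
    have h : {φ : WeakDual ℝ X | ‖toStrongDual φ‖ ≤ 1}
        = toStrongDual ⁻¹' Metric.closedBall 0 1 := by
      ext φ; simp [Metric.mem_closedBall, dist_zero_right]
    rw [h]; exact WeakDual.isCompact_closedBall (0 : StrongDual ℝ X) 1
  exact isCompact_iff_compactSpace.mp this


/-- Let `𝒦` and `ℬ` be associated classes of compact Hausdorff spaces and Banach spaces
(`K ∈ 𝒦` implies `C(K) ∈ ℬ`; `X ∈ ℬ` implies `B_{X*} ∈ 𝒦`). If `K ∈ 𝒦` is weakly universal
for `𝒦` (every `L ∈ 𝒦` is a continuous image of a closed subspace of `K`), then `C(K)` is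
weakly universal for `ℬ`: every `X ∈ ℬ` is isomorphic to a quotient of a closed subspace of
`C(K)`, i.e. the image of a bounded linear surjection from a closed subspace of `C(K)`. -/
theorem stmt13
    (𝒦 : (K : Type) → [TopologicalSpace K] → Prop)
    (ℬ : (X : Type) → [NormedAddCommGroup X] → [NormedSpace ℝ X] → Prop)
    (h1 : ∀ (L : Type) [TopologicalSpace L] [CompactSpace L] [T2Space L],
      𝒦 L → ℬ C(L, ℝ))
    (h2 : ∀ (X : Type) [NormedAddCommGroup X] [NormedSpace ℝ X] [CompleteSpace X],
      ℬ X → 𝒦 {φ : WeakDual ℝ X // ‖toStrongDual φ‖ ≤ 1})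
    (K : Type) [TopologicalSpace K] [CompactSpace K] [T2Space K] (hK : 𝒦 K)
    (huniv : ∀ (L : Type) [TopologicalSpace L] [CompactSpace L] [T2Space L],
      𝒦 L → ∃ C : Set K, IsClosed C ∧ ∃ f : C → L, Continuous f ∧ Function.Surjective f) :
    ∀ (X : Type) [NormedAddCommGroup X] [NormedSpace ℝ X] [CompleteSpace X], ℬ X →
      ∃ Z : Submodule ℝ C(K, ℝ), IsClosed (Z : Set C(K, ℝ)) ∧
        ∃ T : Z →L[ℝ] X, Function.Surjective T := by
  intro X _ _ _ hX
  haveI : CompactSpace {φ : WeakDual ℝ X // ‖toStrongDual φ‖ ≤ 1} := aux_compact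
  obtain ⟨C, hC, f, hf, hfs⟩ :=
    huniv {φ : WeakDual ℝ X // ‖toStrongDual φ‖ ≤ 1} (h2 X hX)
  haveI : CompactSpace ↥C := isCompact_iff_compactSpace.mp (hC.isCompact)
  have jc : ∀ x : X, Continuous fun c : C => ((f c : WeakDual ℝ X) x) :=
    fun x => (WeakDual.eval_continuous x).comp (continuous_subtype_val.comp hf)
  let j : X →ₗ[ℝ] C(↥C, ℝ) :=
    { toFun := fun x => ⟨fun c => (f c : WeakDual ℝ X) x, jc x⟩
      map_add' := by intro x y; ext c; simp
      map_smul' := by intro r x; ext c; simp }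
  have hj : ∀ x : X, ‖j x‖ = ‖x‖ := by
    intro x
    apply le_antisymm
    · refine (ContinuousMap.norm_le _ (norm_nonneg x)).mpr fun c => ?_
      calc ‖(f c : WeakDual ℝ X) x‖ ≤ ‖toStrongDual (f c : WeakDual ℝ X)‖ * ‖x‖ :=
            (toStrongDual (f c : WeakDual ℝ X)).le_opNorm x
        _ ≤ 1 * ‖x‖ := by gcongr; exact (f c).2
        _ = ‖x‖ := one_mul _
    · refine NormedSpace.norm_le_dual_bound ℝ x (norm_nonneg (j x)) fun g => ?_
      rcases eq_or_ne g 0 with hg | hg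
      · simp [hg]
      · set ψ : StrongDual ℝ X := ‖g‖⁻¹ • g with hψ
        have hψn : ‖toStrongDual (StrongDual.toWeakDual ψ)‖ ≤ 1 := by
          have : ‖ψ‖ = 1 := by
            rw [hψ, norm_smul, norm_inv, norm_norm,
              inv_mul_cancel₀ (norm_ne_zero_iff.mpr hg)]
          simpa using this.le
        obtain ⟨c, hc⟩ := hfs ⟨StrongDual.toWeakDual ψ, hψn⟩
        have hval : (j x) c = ψ x := by
          show (f c : WeakDual ℝ X) x = ψ x
          rw [hc]; rfl
        have h1 : ‖ψ x‖ ≤ ‖j x‖ := hval ▸ (j x).norm_coe_le_norm c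
        have hgψ : ‖g‖ • ψ = g := by
          rw [hψ, smul_smul, mul_inv_cancel₀ (norm_ne_zero_iff.mpr hg), one_smul]
        have h2 : g x = ‖g‖ • ψ x := by
          conv_lhs => rw [← hgψ]
          exact ContinuousLinearMap.smul_apply _ _ _
        rw [h2]
        calc ‖‖g‖ • ψ x‖ = ‖g‖ * ‖ψ x‖ := by
              rw [norm_smul, norm_norm]
          _ ≤ ‖g‖ * ‖j x‖ := by gcongr
          _ = ‖j x‖ * ‖g‖ := mul_comm _ _
  let J : X →ₗᵢ[ℝ] C(↥C, ℝ) := ⟨j, hj⟩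
  have hji : Function.Injective j := J.injective
  have hrange : IsClosed (Set.range j) := by
    have := (J.isometry.isClosedEmbedding).isClosed_range
    exact this
  let Rl : C(K, ℝ) →ₗ[ℝ] C(↥C, ℝ) :=
    { toFun := fun g => g.restrict C
      map_add' := fun g h => rfl
      map_smul' := fun r g => rfl }
  have hRb : ∀ g : C(K, ℝ), ‖Rl g‖ ≤ 1 * ‖g‖ := fun g => by
    rw [one_mul]
    exact (ContinuousMap.norm_le _ (norm_nonneg g)).mpr fun c => g.norm_coe_le_norm c
  let R : C(K, ℝ) →L[ℝ] C(↥C, ℝ) := Rl.mkContinuous 1 hRb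
  refine ⟨Submodule.comap Rl (LinearMap.range j), ?_, ?_⟩
  · have : (Submodule.comap Rl (LinearMap.range j) : Set C(K, ℝ))
        = R ⁻¹' (Set.range j) := by
      ext g; simp [Submodule.mem_comap, LinearMap.mem_range, R]
    rw [this]
    exact hrange.preimage R.continuous
  · set Z := Submodule.comap Rl (LinearMap.range j) with hZ
    have hmem : ∀ z : Z, ∃ x : X, j x = Rl z.1 := fun z => z.2
    choose t ht using hmem
    have tadd : ∀ z w : Z, t (z + w) = t z + t w := fun z w => hji (by
      rw [map_add j, ht, ht, ht]; rfl)
    have tsmul : ∀ (r : ℝ) (z : Z), t (r • z) = r • t z := fun r z => hji (by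
      rw [map_smul j, ht, ht]; rfl)
    let tl : Z →ₗ[ℝ] X := { toFun := t, map_add' := tadd, map_smul' := tsmul }
    have tb : ∀ z : Z, ‖tl z‖ ≤ 1 * ‖z‖ := fun z => by
      have h1 : ‖t z‖ = ‖Rl z.1‖ := by rw [← hj (t z), ht z]
      calc ‖tl z‖ = ‖Rl z.1‖ := h1
        _ ≤ 1 * ‖z.1‖ := hRb z.1
        _ = 1 * ‖z‖ := rfl
    refine ⟨tl.mkContinuous 1 tb, fun x => ?_⟩
    obtain ⟨g, hg⟩ := (j x).exists_restrict_eq hC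
    have hgZ : g ∈ Z := ⟨x, hg.symm⟩
    refine ⟨⟨g, hgZ⟩, hji ?_⟩
    show j (t ⟨g, hgZ⟩) = j x
    rw [ht ⟨g, hgZ⟩]; exact hg
end

section
/- The space ℕ* = βℕ \ ℕ maps continuously onto the Cantor cube 2^(2^ω); consequently ℕ* maps continuously onto [0,1]^(2^ω). -/
/-- `ℕ* = βℕ \ ℕ`, the Čech–Stone remainder of the discrete space of natural numbers. -/
def NStar : Type := {x : StoneCech ℕ // x ∉ Set.range (stoneCechUnit : ℕ → StoneCech ℕ)}

instance : TopologicalSpace NStar := instTopologicalSpaceSubtype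

noncomputable section
open Filter Set Topology

/-- Index type for the independent family: pairs (finite set, finite family of finite sets). -/
abbrev IFIdx : Type := Finset ℕ × Finset (Finset ℕ)

noncomputable def ifEquiv : IFIdx ≃ ℕ := Denumerable.eqv _

/-- The independent family indexed by `Set ℕ`. -/
def indepA (S : Set ℕ) : Set ℕ :=
  {n | ∃ G ∈ (ifEquiv.symm n).2, (G : Set ℕ) = ↑(ifEquiv.symm n).1 ∩ S}

/-- A Boolean combination of the independent family. -/
def combo (ε : Set ℕ → Bool) (S : Set ℕ) : Set ℕ :=
  if ε S then indepA S else (indepA S)ᶜ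

lemma combo_infinite (ε : Set ℕ → Bool) (T : Finset (Set ℕ)) :
    (⋂ S ∈ T, combo ε S).Infinite := by
  classical
  -- a "separating point" for two distinct sets
  set d : Set ℕ → Set ℕ → ℕ := fun S S' =>
    if h : ∃ x, ¬(x ∈ S ↔ x ∈ S') then h.choose else 0 with hd
  set F₀ : Finset ℕ := (T ×ˢ T).image fun p => d p.1 p.2 with hF₀
  have hsep : ∀ S ∈ T, ∀ S' ∈ T, S ≠ S' → ∃ x ∈ F₀, ¬(x ∈ S ↔ x ∈ S') := by
    intro S hS S' hS' hne
    have h : ∃ x, ¬(x ∈ S ↔ x ∈ S') := by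
      by_contra hcon
      push_neg at hcon
      exact hne (Set.ext fun x => hcon x)
    refine ⟨d S S', ?_, ?_⟩
    · exact Finset.mem_image.mpr ⟨(S, S'), Finset.mem_product.mpr ⟨hS, hS'⟩, rfl⟩
    · rw [hd]; simp only [h, dif_pos]; exact h.choose_spec
  set M : ℕ := F₀.sup id + 1 with hM
  set Fk : ℕ → Finset ℕ := fun k => insert (M + k) F₀ with hFk
  set 𝒜k : ℕ → Finset (Finset ℕ) := fun k =>
    (T.filter fun S => ε S = true).image fun S => (Fk k).filter (· ∈ S) with h𝒜k
  set φ : ℕ → ℕ := fun k => ifEquiv (Fk k, 𝒜k k) with hφ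
  have hFkinj : Function.Injective Fk := by
    intro k j h
    have hmem : M + k ∈ Fk j := h ▸ Finset.mem_insert_self _ _
    rcases Finset.mem_insert.mp hmem with h1 | h1
    · omega
    · have := Finset.le_sup (f := id) h1
      simp only [id] at this; omega
  have hinj : Function.Injective φ := fun k j h => by
    have := ifEquiv.injective h
    exact hFkinj (congrArg Prod.fst this)
  have hmem : ∀ k, φ k ∈ ⋂ S ∈ T, combo ε S := by
    intro k
    refine Set.mem_iInter₂.mpr fun S hS => ?_
    have hsymm : ifEquiv.symm (φ k) = (Fk k, 𝒜k k) := ifEquiv.symm_apply_apply _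
    rcases hε : ε S with _ | _
    · -- ε S = false : must show φ k ∈ (indepA S)ᶜ
      simp only [combo, hε, Bool.false_eq_true, if_false]
      intro hmem'
      obtain ⟨G, hG, hGeq⟩ := hmem'
      rw [hsymm] at hG hGeq
      obtain ⟨S', hS'mem, rfl⟩ := Finset.mem_image.mp hG
      obtain ⟨hS'T, hS'ε⟩ := Finset.mem_filter.mp hS'mem
      have hne : S ≠ S' := fun hcon => by rw [hcon] at hε; rw [hε] at hS'ε; exact Bool.noConfusion hS'ε
      obtain ⟨x, hxF₀, hx⟩ := hsep S hS S' hS'T hne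
      have hxFk : x ∈ Fk k := Finset.mem_insert_of_mem hxF₀
      have hGset : ((Fk k).filter (· ∈ S') : Set ℕ) = ↑(Fk k) ∩ S' := by
        ext y; simp [Finset.mem_filter]
      rw [hGset] at hGeq
      apply hx
      constructor
      · intro hxS
        have : x ∈ (↑(Fk k) ∩ S : Set ℕ) := ⟨hxFk, hxS⟩
        rw [← hGeq] at this; exact this.2
      · intro hxS'
        have : x ∈ (↑(Fk k) ∩ S' : Set ℕ) := ⟨hxFk, hxS'⟩
        rw [hGeq] at this; exact this.2
    · -- ε S = true
      simp only [combo, hε, if_pos]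
      refine ⟨(Fk k).filter (· ∈ S), ?_, ?_⟩
      · rw [hsymm]
        exact Finset.mem_image.mpr ⟨S, Finset.mem_filter.mpr ⟨hS, hε⟩, rfl⟩
      · rw [hsymm]
        ext y; simp [Finset.mem_filter]
  exact Set.infinite_of_injective_forall_mem hinj hmem

lemma exists_good_ultrafilter (ε : Set ℕ → Bool) :
    ∃ U : Ultrafilter ℕ, (∀ S, combo ε S ∈ U) ∧ ∀ s : Set ℕ, sᶜ.Finite → s ∈ U := by
  classical
  have hcond : ∀ T : Finset (Set ℕ),
      (↑T : Set (Set ℕ)) ⊆ Set.range (combo ε) ∪ {s | sᶜ.Finite} →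
      (⋂₀ (↑T : Set (Set ℕ))).Nonempty := by
    intro T hT
    set σ : Set ℕ → Set ℕ := fun u =>
      if h : u ∈ Set.range (combo ε) then h.choose else ∅ with hσ
    have hσ_spec : ∀ u ∈ Set.range (combo ε), combo ε (σ u) = u := by
      intro u hu
      rw [hσ]; simp only [hu, dif_pos]; exact hu.choose_spec
    set T₁ : Finset (Set ℕ) := T.filter (· ∈ Set.range (combo ε)) with hT₁
    set T₂ : Finset (Set ℕ) := T.filter (· ∉ Set.range (combo ε)) with hT₂
    set T' : Finset (Set ℕ) := T₁.image σ with hT'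
    have hI : (⋂ S ∈ T', combo ε S).Infinite := combo_infinite ε T'
    have hK : (⋃ u ∈ T₂, uᶜ).Finite := by
      apply Set.Finite.biUnion T₂.finite_toSet
      intro u hu
      have huT : u ∈ T := (Finset.mem_filter.mp hu).1
      have hur : u ∉ Set.range (combo ε) := (Finset.mem_filter.mp hu).2
      rcases hT huT with h | h
      · exact absurd h hur
      · exact h
    obtain ⟨x, hxI, hxK⟩ := (hI.diff hK).nonempty
    refine ⟨x, ?_⟩
    intro u hu
    have huT : u ∈ T := hu
    by_cases hur : u ∈ Set.range (combo ε)
    · have : σ u ∈ T' := Finset.mem_image.mpr ⟨u, Finset.mem_filter.mpr ⟨huT, hur⟩, rfl⟩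
      have := Set.mem_iInter₂.mp hxI (σ u) this
      rwa [hσ_spec u hur] at this
    · by_contra hxu
      exact hxK (Set.mem_biUnion (Finset.mem_filter.mpr ⟨huT, hur⟩) hxu)
  obtain ⟨U, hU⟩ := Ultrafilter.exists_ultrafilter_of_finite_inter_nonempty _ hcond
  exact ⟨U, fun S => hU (Or.inl ⟨S, rfl⟩), fun s hs => hU (Or.inr hs)⟩

lemma ultrafilter_extend_eq_of_mem {f : ℕ → Bool} {U : Ultrafilter ℕ} {b : Bool}
    (h : f ⁻¹' {b} ∈ U) : Ultrafilter.extend f U = b := by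
  rw [ultrafilter_extend_eq_iff]
  have : (𝓝 b : Filter Bool) = pure b := by rw [nhds_discrete]
  rw [this, Filter.le_pure_iff]
  exact h

/-- The point of the Stone–Čech compactification corresponding to an ultrafilter. -/
def uPt (U : Ultrafilter ℕ) : StoneCech ℕ := T2Quotient.mk (Quot.mk _ U : PreStoneCech ℕ)

lemma stoneCechExtend_uPt {g : ℕ → Bool} (hg : Continuous g) (U : Ultrafilter ℕ) :
    stoneCechExtend hg (uPt U) = Ultrafilter.extend g U := by
  rw [stoneCechExtend, uPt]
  rfl

lemma uPt_not_unit {U : Ultrafilter ℕ} (hU : ∀ n : ℕ, ({n}ᶜ : Set ℕ) ∈ U) :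
    uPt U ∉ Set.range (stoneCechUnit : ℕ → StoneCech ℕ) := by
  rintro ⟨n, hn⟩
  classical
  set χ : ℕ → Bool := fun m => decide (m = n) with hχ
  have hc : Continuous χ := continuous_of_discreteTopology
  have h1 : stoneCechExtend hc (stoneCechUnit n) = χ n :=
    congrFun (stoneCechExtend_extends hc) n
  have h2 : stoneCechExtend hc (uPt U) = false := by
    rw [stoneCechExtend_uPt]
    apply ultrafilter_extend_eq_of_mem
    have : χ ⁻¹' {false} = ({n}ᶜ : Set ℕ) := by
      ext m; simp [hχ]
    rw [this]; exact hU n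
  rw [hn, h2] at h1
  simp [hχ] at h1


def valSeq (a : ℕ → Bool) (n : ℕ) : ℝ := if a n then (2:ℝ)⁻¹ ^ (n + 1) else 0

lemma valSeq_nonneg (a : ℕ → Bool) (n : ℕ) : 0 ≤ valSeq a n := by
  unfold valSeq; split <;> positivity

lemma valSeq_le (a : ℕ → Bool) (n : ℕ) : valSeq a n ≤ (2:ℝ)⁻¹ ^ (n + 1) := by
  unfold valSeq; split
  · exact le_rfl
  · positivity

lemma summable_half : Summable (fun n : ℕ => (2:ℝ)⁻¹ ^ (n + 1)) := by
  have h : Summable (fun n : ℕ => (2:ℝ)⁻¹ ^ n) :=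
    summable_geometric_of_lt_one (by norm_num) (by norm_num)
  have := h.mul_right (2:ℝ)⁻¹
  simpa [pow_succ] using this

lemma tsum_half : ∑' n : ℕ, (2:ℝ)⁻¹ ^ (n + 1) = 1 := by
  simp_rw [pow_succ]
  rw [tsum_mul_right, tsum_geometric_of_lt_one (by norm_num) (by norm_num)]
  norm_num

lemma summable_valSeq (a : ℕ → Bool) : Summable (valSeq a) :=
  Summable.of_nonneg_of_le (valSeq_nonneg a) (valSeq_le a) summable_half

def remSeq (r : ℝ) : ℕ → ℝ
  | 0 => r
  | n + 1 => if (2:ℝ)⁻¹ ^ (n + 1) ≤ remSeq r n then remSeq r n - (2:ℝ)⁻¹ ^ (n + 1) else remSeq r n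

def digSeq (r : ℝ) (n : ℕ) : Bool := decide ((2:ℝ)⁻¹ ^ (n + 1) ≤ remSeq r n)

lemma remSeq_bounds {r : ℝ} (hr : r ∈ Set.Icc (0:ℝ) 1) (n : ℕ) :
    0 ≤ remSeq r n ∧ remSeq r n ≤ (2:ℝ)⁻¹ ^ n := by
  induction n with
  | zero => simpa [remSeq] using hr
  | succ n ih =>
    obtain ⟨h0, h1⟩ := ih
    unfold remSeq
    split
    · constructor
      · linarith
      · have : (2:ℝ)⁻¹ ^ n = 2 * (2:ℝ)⁻¹ ^ (n+1) := by ring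
        rw [this] at h1; linarith
    · rename_i h
      push_neg at h
      exact ⟨h0, le_of_lt h⟩

lemma sum_valSeq_digSeq (r : ℝ) (n : ℕ) :
    ∑ i ∈ Finset.range n, valSeq (digSeq r) i = r - remSeq r n := by
  induction n with
  | zero => simp [remSeq]
  | succ n ih =>
    rw [Finset.sum_range_succ, ih]
    have hstep : remSeq r (n + 1) =
        if (2:ℝ)⁻¹ ^ (n + 1) ≤ remSeq r n then remSeq r n - (2:ℝ)⁻¹ ^ (n + 1)
        else remSeq r n := rfl
    rw [hstep]
    simp only [valSeq, digSeq]
    by_cases h : (2:ℝ)⁻¹ ^ (n + 1) ≤ remSeq r n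
    · simp only [h, if_true, decide_eq_true_eq]
      ring
    · simp only [h, if_false, decide_eq_true_eq]
      ring

lemma hasSum_digSeq {r : ℝ} (hr : r ∈ Set.Icc (0:ℝ) 1) : HasSum (valSeq (digSeq r)) r := by
  rw [hasSum_iff_tendsto_nat_of_nonneg (valSeq_nonneg _) r]
  simp_rw [sum_valSeq_digSeq r]
  have hrem : Tendsto (fun n => remSeq r n) atTop (𝓝 0) := by
    have hpow : Tendsto (fun n : ℕ => (2:ℝ)⁻¹ ^ n) atTop (𝓝 0) :=
      tendsto_pow_atTop_nhds_zero_of_lt_one (by norm_num) (by norm_num)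
    exact squeeze_zero (fun n => (remSeq_bounds hr n).1) (fun n => (remSeq_bounds hr n).2) hpow
  have h2 : Tendsto (fun n => r - remSeq r n) atTop (𝓝 (r - 0)) :=
    Tendsto.sub tendsto_const_nhds hrem
  simpa using h2

/-- The Cantor surjection onto `[0,1]`. -/
def cantorMap (a : ℕ → Bool) : Set.Icc (0:ℝ) 1 :=
  ⟨∑' n, valSeq a n, by
    constructor
    · exact tsum_nonneg (valSeq_nonneg a)
    · have := Summable.tsum_le_tsum (valSeq_le a) (summable_valSeq a) summable_half
      rwa [tsum_half] at this⟩

lemma continuous_cantorMap : Continuous cantorMap := by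
  have hc : Continuous fun a : ℕ → Bool => ∑' n, valSeq a n := by
    refine continuous_tsum (f := fun n (a : ℕ → Bool) => valSeq a n)
      (u := fun n => (2:ℝ)⁻¹ ^ (n + 1)) (fun n => ?_) summable_half (fun n a => ?_)
    · exact Continuous.comp (g := fun b : Bool => if b then (2:ℝ)⁻¹ ^ (n + 1) else 0)
        continuous_of_discreteTopology (continuous_apply n)
    · rw [Real.norm_eq_abs, abs_of_nonneg (valSeq_nonneg a n)]
      exact valSeq_le a n
  exact hc.subtype_mk _

lemma surjective_cantorMap : Function.Surjective cantorMap := by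
  rintro ⟨r, hr⟩
  exact ⟨digSeq r, Subtype.ext (hasSum_digSeq hr).tsum_eq⟩


open scoped Classical in
/-- Indicator function of a member of the independent family. -/
noncomputable def chiA (S : Set ℕ) : ℕ → Bool := fun n => if n ∈ indepA S then true else false

lemma continuous_chiA (S : Set ℕ) : Continuous (chiA S) := continuous_of_discreteTopology

/-- The equivalence `Set ℕ ≃ Set ℕ × ℕ` given by cardinal arithmetic. -/
noncomputable def prodEquiv : Set ℕ ≃ Set ℕ × ℕ :=
  Classical.choice (Cardinal.eq.mp (by
    rw [Cardinal.mk_prod, Cardinal.lift_id, Cardinal.lift_id, Cardinal.mk_set, Cardinal.mk_nat]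
    exact (Cardinal.mul_eq_left (Cardinal.cantor Cardinal.aleph0).le
      (Cardinal.cantor Cardinal.aleph0).le Cardinal.aleph0_ne_zero).symm))

lemma nstar_onto_cantorCube :
    ∃ f : NStar → (Set ℕ → Bool), Continuous f ∧ Function.Surjective f := by
  refine ⟨fun z S => stoneCechExtend (continuous_chiA S) z.1, ?_, ?_⟩
  · exact continuous_pi fun S => (continuous_stoneCechExtend _).comp continuous_subtype_val
  · intro ε
    obtain ⟨U, hU1, hU2⟩ := exists_good_ultrafilter ε
    have hfree : ∀ n : ℕ, ({n}ᶜ : Set ℕ) ∈ U := fun n => hU2 _ (by simp)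
    refine ⟨⟨uPt U, uPt_not_unit hfree⟩, ?_⟩
    funext S
    show stoneCechExtend (continuous_chiA S) (uPt U) = ε S
    rw [stoneCechExtend_uPt]
    apply ultrafilter_extend_eq_of_mem
    have hcombo := hU1 S
    rcases hε : ε S with _ | _
    · have hpre : chiA S ⁻¹' {false} = (indepA S)ᶜ := by
        ext n; simp [chiA]
      rw [hpre]
      rw [combo, hε] at hcombo
      simpa using hcombo
    · have hpre : chiA S ⁻¹' {true} = indepA S := by
        ext n; simp [chiA]
      rw [hpre]
      rw [combo, hε] at hcombo
      simpa using hcombo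

lemma nstar_onto_hilbertCube :
    ∃ g : NStar → (Set ℕ → Set.Icc (0 : ℝ) 1), Continuous g ∧ Function.Surjective g := by
  obtain ⟨f, hfc, hfs⟩ := nstar_onto_cantorCube
  refine ⟨fun z S => cantorMap (fun n => f z (prodEquiv.symm (S, n))), ?_, ?_⟩
  · refine continuous_pi fun S => continuous_cantorMap.comp ?_
    exact continuous_pi fun n => (continuous_apply _).comp hfc
  · intro k
    choose a ha using fun S => surjective_cantorMap (k S)
    obtain ⟨z, hz⟩ := hfs (fun X => a (prodEquiv X).1 (prodEquiv X).2)
    refine ⟨z, funext fun S => ?_⟩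
    show cantorMap (fun n => f z (prodEquiv.symm (S, n))) = k S
    have heq : (fun n => f z (prodEquiv.symm (S, n))) = a S := by
      funext n
      rw [hz]
      simp
    rw [heq, ha]

/-- `ℕ*` maps continuously onto the Cantor cube `2^(2^ω)` (here with the index set of
cardinality `2^ω` realized as `Set ℕ`); consequently `ℕ*` also maps continuously onto
`[0,1]^(2^ω)`. -/
theorem stmt18 :
    (∃ f : NStar → (Set ℕ → Bool), Continuous f ∧ Function.Surjective f) ∧
      ∃ g : NStar → (Set ℕ → Set.Icc (0 : ℝ) 1), Continuous g ∧ Function.Surjective g := by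
  exact ⟨nstar_onto_cantorCube, nstar_onto_hilbertCube⟩
end
end

section
/- If X is a Banach space whose dual unit ball B_{X*} is weak*-separable, then X embeds isometrically into ℓ∞/c₀. -/
open WeakDual Filter

/-- `c₀`: the subspace of `ℓ∞ = (ℕ →ᵇ ℝ)` consisting of sequences converging to `0`. -/
def cZero : Submodule ℝ (BoundedContinuousFunction ℕ ℝ) where
  carrier := {f | Tendsto (⇑f) atTop (nhds (0 : ℝ))}
  zero_mem' := by
    show Tendsto _ atTop _
    exact tendsto_const_nhds
  add_mem' := by
    intro f g hf hg
    have h := hf.add hg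
    rw [add_zero] at h
    exact h
  smul_mem' := by
    intro c f hf
    simpa using hf.const_mul c

/-- If `X` is a Banach space whose closed dual unit ball is separable in the weak* topology,
then `X` embeds isometrically into `ℓ∞/c₀`. -/
theorem stmt19 (X : Type) [NormedAddCommGroup X] [NormedSpace ℝ X] [CompleteSpace X]
    (hsep : TopologicalSpace.SeparableSpace {φ : WeakDual ℝ X // ‖toStrongDual φ‖ ≤ 1}) :
    Nonempty (X →ₗᵢ[ℝ] (BoundedContinuousFunction ℕ ℝ ⧸ cZero)) := by
  set D := {φ : WeakDual ℝ X // ‖toStrongDual φ‖ ≤ 1}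
  have hne : Nonempty D := ⟨⟨0, by simp⟩⟩
  obtain ⟨u, hu⟩ := TopologicalSpace.exists_dense_seq D
  -- each u k appears infinitely often in ψ
  set ψ : ℕ → StrongDual ℝ X := fun n => toStrongDual (u n.unpair.1).1 with hψ
  have hψnorm : ∀ n, ‖ψ n‖ ≤ 1 := fun n => (u n.unpair.1).2
  -- the map into ℓ∞
  have hbd : ∀ (x : X) (n : ℕ), ‖ψ n x‖ ≤ ‖x‖ := by
    intro x n
    calc ‖ψ n x‖ ≤ ‖ψ n‖ * ‖x‖ := (ψ n).le_opNorm x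
    _ ≤ 1 * ‖x‖ := by
        apply mul_le_mul_of_nonneg_right (hψnorm n) (norm_nonneg x)
    _ = ‖x‖ := one_mul _
  set L : X →ₗ[ℝ] BoundedContinuousFunction ℕ ℝ :=
    { toFun := fun x => BoundedContinuousFunction.ofNormedAddCommGroup
        (fun n => ψ n x) continuous_of_discreteTopology ‖x‖ (hbd x)
      map_add' := by intro x y; ext n; simp
      map_smul' := by intro c x; ext n; simp } with hL
  have hLcoe : ∀ (x : X) (n : ℕ), L x n = ψ n x := fun x n => rfl
  refine ⟨{ toLinearMap := cZero.mkQ.comp L, norm_map' := ?_ }⟩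
  intro x
  apply le_antisymm
  · calc ‖(cZero.mkQ.comp L) x‖ = ‖Submodule.Quotient.mk (L x)‖ := rfl
    _ ≤ ‖L x‖ := Submodule.Quotient.norm_mk_le _ _
    _ ≤ ‖x‖ := BoundedContinuousFunction.norm_ofNormedAddCommGroup_le _ (norm_nonneg x) (hbd x)
  · rcases eq_or_ne x 0 with rfl | hx
    · exact norm_zero.trans_le (norm_nonneg ((cZero.mkQ ∘ₗ L) (0 : X)))
    by_contra hlt
    push_neg at hlt
    obtain ⟨m, hm, hmlt⟩ := Submodule.Quotient.norm_mk_lt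
      ((cZero.mkQ.comp L) x) (sub_pos.mpr hlt)
    rw [add_sub_cancel] at hmlt
    set δ : ℝ := (‖x‖ - ‖m‖) / 2 with hδdef
    have hδ : 0 < δ := by rw [hδdef]; linarith
    -- find a functional nearly attaining the norm
    obtain ⟨g, hg1, hgx⟩ := exists_dual_vector ℝ x (norm_ne_zero_iff.mpr hx)
    -- the open set in D
    set U : Set D := {φ | ‖x‖ - δ < |(φ : WeakDual ℝ X) x|} with hU
    have hUopen : IsOpen U := by
      have hc : Continuous fun φ : D => |(φ : WeakDual ℝ X) x| :=
        ((WeakDual.eval_continuous x).comp continuous_subtype_val).abs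
      exact isOpen_lt continuous_const hc
    have hUne : U.Nonempty := by
      refine ⟨⟨toStrongDual.symm g, by simp [hg1]⟩, ?_⟩
      show ‖x‖ - δ < |g x|
      have hgx' : g x = ‖x‖ := by exact_mod_cast hgx
      rw [hgx', abs_of_nonneg (norm_nonneg x)]
      linarith
    obtain ⟨k, hk⟩ := hu.exists_mem_open hUopen hUne
    -- m differs from L x by a c₀ sequence
    have hmem : L x - m ∈ cZero := by
      rw [← Submodule.Quotient.eq]
      exact hm.symm
    have htend : Tendsto (fun n => (L x - m) n) atTop (nhds 0) := hmem
    obtain ⟨N, hN⟩ := (Metric.tendsto_atTop.mp htend) δ hδ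
    set n := Nat.pair k N with hn
    have hnN : N ≤ n := Nat.right_le_pair k N
    have hun : ψ n = toStrongDual (u k).1 := by
      simp [hψ, hn, Nat.unpair_pair]
    have h1 : ‖x‖ - δ < |ψ n x| := by rw [hun]; exact hk
    have h2 : |(L x - m) n| < δ := by
      have := hN n hnN
      simpa [Real.dist_eq] using this
    have h3 : |m n| ≤ ‖m‖ := by
      simpa using m.norm_coe_le_norm n
    have h4 : |ψ n x| - |m n| ≤ |(L x - m) n| := by
      have : (L x - m) n = ψ n x - m n := by
        simp [hLcoe]
      rw [this]
      exact abs_sub_abs_le_abs_sub _ _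
    have : ‖x‖ - ‖m‖ < 2 * δ := by linarith
    rw [hδdef] at this
    linarith
end
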